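/- Let p ∈ (0,1), q = 1−p, and let (q_n)_{n≥1} ⊂ [0,1] with ∑_{n≥1} q_n = 1. Let P be the stochastic matrix on ℕ with P(0,n) = q_n for n ≥ 1, and P(n,0) = p, P(n,n+1) = q for n ≥ 1. Let γ ∈ (1,1/q) with ∑_{n≥1} q_n γ^n < ∞. Suppose λ ∈ ℂ with max(qγ, p) < |λ| ≤ 1 and f : ℕ → ℂ is nonzero with sup_n |f(n)|/γ^n < ∞ and ∑_j P(i,j) f(j) = λ f(i) for all i ∈ ℕ. Then λ = 1 and f is constant. -/

import Mathlib

/-- Action of an infinite matrix `P` on functions `f : ℕ → ℂ`: `(Pf)(i) = ∑_j P(i,j) f(j)`. -/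
noncomputable def matActC (P : ℕ → ℕ → ℝ) (f : ℕ → ℂ) : ℕ → ℂ :=
  fun i => ∑' j, (P i j : ℂ) * f j

/-- for the non-reversible random walk with unbounded increments, any
eigenvalue `λ` of `P` on `B_γ` with `max(qγ,p) < |λ| ≤ 1` equals `1`, and the
corresponding eigenfunctions are constant. -/
theorem unbounded_rw_eigenvalue
    (p q : ℝ) (hp0 : 0 < p) (hp1 : p < 1) (hpq : q = 1 - p)
    (qseq : ℕ → ℝ)
    (hq01 : ∀ n, 1 ≤ n → 0 ≤ qseq n ∧ qseq n ≤ 1)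
    (hqsum : HasSum (fun n : ℕ => qseq (n + 1)) 1)
    (P : ℕ → ℕ → ℝ)
    (hP00 : P 0 0 = 0) (hP0 : ∀ n, 1 ≤ n → P 0 n = qseq n)
    (hPn : ∀ n : ℕ, 1 ≤ n → ∀ j, P n j = if j = 0 then p else if j = n + 1 then q else 0)
    (γ : ℝ) (hγ1 : 1 < γ) (hγq : γ < 1 / q)
    (hmom : Summable (fun n : ℕ => qseq (n + 1) * γ ^ (n + 1)))
    (lam : ℂ) (hlam1 : max (q * γ) p < ‖lam‖) (hlam2 : ‖lam‖ ≤ 1)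
    (f : ℕ → ℂ) (hf0 : f ≠ 0)
    (hfb : ∃ C : ℝ, ∀ n, ‖f n‖ ≤ C * γ ^ n)
    (heig : ∀ i, matActC P f i = lam * f i) :
    lam = 1 ∧ ∀ m n, f m = f n := by
  obtain ⟨C, hC⟩ := hfb
  have hq0 : 0 < q := by rw [hpq]; linarith
  have hγ0 : 0 < γ := by linarith
  have hqγ : q * γ < ‖lam‖ := lt_of_le_of_lt (le_max_left _ _) hlam1
  have hplam : p < ‖lam‖ := lt_of_le_of_lt (le_max_right _ _) hlam1
  have hqlt : q < ‖lam‖ := by nlinarith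
  have hlamq : lam ≠ (q : ℂ) := by
    intro h
    rw [h] at hqlt
    rw [Complex.norm_real, Real.norm_eq_abs, abs_of_pos hq0] at hqlt
    linarith
  have hqC0 : (q : ℂ) ≠ 0 := by exact_mod_cast hq0.ne'
  have hlamqC : lam - (q : ℂ) ≠ 0 := sub_ne_zero.mpr hlamq
  set K : ℂ := (p : ℂ) * f 0 / (lam - q) with hKdef
  have hKeq : K * (lam - q) = (p : ℂ) * f 0 := by
    rw [hKdef, div_mul_cancel₀ _ hlamqC]
  -- action for i ≥ 1
  have hact : ∀ n : ℕ, 1 ≤ n → matActC P f n = (p : ℂ) * f 0 + (q : ℂ) * f (n + 1) := by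
    intro n hn
    have h0ne : (0 : ℕ) ≠ n + 1 := by omega
    unfold matActC
    rw [tsum_eq_sum (s := {0, n + 1}) ?_]
    · rw [Finset.sum_pair h0ne, hPn n hn 0, hPn n hn (n + 1)]
      have : n + 1 ≠ 0 := by omega
      simp [this]
    · intro b hb
      simp only [Finset.mem_insert, Finset.mem_singleton] at hb
      push_neg at hb
      rw [hPn n hn b, if_neg hb.1, if_neg hb.2]
      simp
  -- recursion
  have hrec : ∀ n : ℕ, 1 ≤ n → (q : ℂ) * f (n + 1) = lam * f n - (p : ℂ) * f 0 := by
    intro n hn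
    have := heig n
    rw [hact n hn] at this
    linear_combination this
  -- geometric form
  have hgeo : ∀ m : ℕ, f (m + 1) - K = (lam / q) ^ m * (f 1 - K) := by
    intro m
    induction m with
    | zero => simp
    | succ m ih =>
      have hr := hrec (m + 1) (by omega)
      have : f (m + 2) - K = (lam / q) * (f (m + 1) - K) := by
        have : (q : ℂ) * (f (m + 2) - K) = lam * (f (m + 1) - K) := by
          linear_combination hr + hKeq
        field_simp at this ⊢
        linear_combination this
      rw [this, ih]
      ring
  -- f 1 = K
  have hC0 : 0 ≤ C := le_trans (norm_nonneg (f 0)) (by simpa using hC 0)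
  have hf1K : f 1 = K := by
    by_contra hne
    have hc : 0 < ‖f 1 - K‖ := by simpa [sub_ne_zero] using hne
    set r : ℝ := ‖lam‖ / (q * γ) with hrdef
    have hr1 : 1 < r := (one_lt_div (by positivity)).mpr hqγ
    have hb : ∀ m : ℕ, r ^ m * ‖f 1 - K‖ ≤ C * γ + ‖K‖ := by
      intro m
      have h1 : ‖f (m + 1) - K‖ = (‖lam‖ / q) ^ m * ‖f 1 - K‖ := by
        rw [hgeo m, norm_mul, norm_pow, norm_div, Complex.norm_real, Real.norm_eq_abs, abs_of_pos hq0]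
      have h2 : ‖f (m + 1) - K‖ ≤ C * γ ^ (m + 1) + ‖K‖ := by
        calc ‖f (m + 1) - K‖ ≤ ‖f (m + 1)‖ + ‖K‖ := norm_sub_le _ _
          _ ≤ C * γ ^ (m + 1) + ‖K‖ := by linarith [hC (m + 1)]
      have hpow : (‖lam‖ / q) ^ m = r ^ m * γ ^ m := by
        rw [hrdef, div_pow, div_pow, mul_pow]
        field_simp
      have hγm : (1 : ℝ) ≤ γ ^ m := one_le_pow₀ hγ1.le
      have h3 : r ^ m * γ ^ m * ‖f 1 - K‖ ≤ C * γ * γ ^ m + ‖K‖ := by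
        rw [← hpow, ← h1]
        calc ‖f (m + 1) - K‖ ≤ C * γ ^ (m + 1) + ‖K‖ := h2
          _ = C * γ * γ ^ m + ‖K‖ := by ring
      have hγmpos : 0 < γ ^ m := by positivity
      have : r ^ m * ‖f 1 - K‖ * γ ^ m ≤ (C * γ + ‖K‖) * γ ^ m := by
        nlinarith [norm_nonneg K, pow_nonneg (le_of_lt (by positivity : (0:ℝ) < r)) m]
      exact le_of_mul_le_mul_right (by linarith) hγmpos
    obtain ⟨m, hm⟩ := pow_unbounded_of_one_lt ((C * γ + ‖K‖) / ‖f 1 - K‖) hr1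
    have : (C * γ + ‖K‖) / ‖f 1 - K‖ * ‖f 1 - K‖ < r ^ m * ‖f 1 - K‖ :=
      (mul_lt_mul_iff_of_pos_right hc).mpr hm
    rw [div_mul_cancel₀ _ hc.ne'] at this
    linarith [hb m]
  have hconst : ∀ m : ℕ, f (m + 1) = K := by
    intro m
    have := hgeo m
    rw [hf1K, sub_self, mul_zero, sub_eq_zero] at this
    exact this
  -- the i = 0 equation
  have hact0 : matActC P f 0 = K := by
    unfold matActC
    have hg : HasSum (fun j : ℕ => (P 0 j : ℂ) * f j) K := by
      have h1 : HasSum (fun n : ℕ => ((qseq (n + 1) : ℝ) : ℂ)) 1 := by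
        have := Complex.ofRealCLM.hasSum hqsum
        simpa using this
      have h2 : HasSum (fun n : ℕ => ((qseq (n + 1) : ℝ) : ℂ) * K) K := by
        simpa using h1.mul_right K
      have h3 : HasSum (fun n : ℕ => (P 0 (n + 1) : ℂ) * f (n + 1)) K := by
        convert h2 using 2 with n
        rw [hP0 (n + 1) (by omega), hconst n]
      have h4 := (hasSum_nat_add_iff (f := fun j : ℕ => (P 0 j : ℂ) * f j) 1).mp h3
      simpa [hP00] using h4
    exact hg.tsum_eq
  have hK : K = lam * f 0 := by rw [← hact0, heig 0]
  -- f 0 ≠ 0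
  have hf00 : f 0 ≠ 0 := by
    intro h0
    apply hf0
    funext n
    simp only [Pi.zero_apply]
    match n with
    | 0 => exact h0
    | (m + 1) =>
      rw [hconst m, hK, h0, mul_zero]
  -- quadratic
  have hquad : (lam - 1) * (lam + (p : ℂ)) = 0 := by
    have h1 : lam * f 0 * (lam - q) = (p : ℂ) * f 0 := by rw [← hK]; exact hKeq
    have h2 : (lam * (lam - q) - p) * f 0 = 0 := by linear_combination h1
    have h3 : lam * (lam - q) - p = 0 := by
      rcases mul_eq_zero.mp h2 with h | h
      · exact h
      · exact absurd h hf00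
    have hqc : (q : ℂ) = 1 - p := by exact_mod_cast hpq
    rw [hqc] at h3
    linear_combination h3
  have hlamne : lam + (p : ℂ) ≠ 0 := by
    intro h
    have : lam = -(p : ℂ) := by linear_combination h
    rw [this] at hplam
    rw [norm_neg, Complex.norm_real, Real.norm_eq_abs, abs_of_pos hp0] at hplam
    linarith
  have hlam : lam = 1 := by
    rcases mul_eq_zero.mp hquad with h | h
    · linear_combination h
    · exact absurd h hlamne
  refine ⟨hlam, ?_⟩
  have hall : ∀ n : ℕ, f n = f 0 := by
    intro n
    match n with
    | 0 => rfl
    | (m + 1) => rw [hconst m, hK, hlam, one_mul]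
  intro m n
  rw [hall m, hall n]
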